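/- Let C_GV be the class of all Kripke models whose frame consists of exactly three worlds x, y, z with accessibility relation R = {(x,x),(y,y),(z,z),(x,y),(x,z)} (a root x below two incomparable final worlds y, z). Then C_GV enjoys 3-IP. -/

import Mathlib

/-- Modal formulas over countably many variables. -/
inductive ModalForm : Type where
  | var : ℕ → ModalForm
  | bot : ModalForm
  | and : ModalForm → ModalForm → ModalForm
  | or : ModalForm → ModalForm → ModalForm
  | not : ModalForm → ModalForm
  | imp : ModalForm → ModalForm → ModalForm
  | box : ModalForm → ModalForm

namespace ModalForm

mutual
  /-- positively occurring variables -/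
  def vpos : ModalForm → Finset ℕ
    | var p => {p}
    | bot => ∅
    | and φ ψ => vpos φ ∪ vpos ψ
    | or φ ψ => vpos φ ∪ vpos ψ
    | not φ => vneg φ
    | imp φ ψ => vneg φ ∪ vpos ψ
    | box φ => vpos φ
  /-- negatively occurring variables -/
  def vneg : ModalForm → Finset ℕ
    | var _ => ∅
    | bot => ∅
    | and φ ψ => vneg φ ∪ vneg ψ
    | or φ ψ => vneg φ ∪ vneg ψ
    | not φ => vpos φ
    | imp φ ψ => vpos φ ∪ vneg ψ
    | box φ => vneg φ
end

/-- Modal depth: maximal nesting of `□`. -/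
def depth : ModalForm → ℕ
  | var _ => 0
  | bot => 0
  | and φ ψ => max (depth φ) (depth ψ)
  | or φ ψ => max (depth φ) (depth ψ)
  | not φ => depth φ
  | imp φ ψ => max (depth φ) (depth ψ)
  | box φ => depth φ + 1

/-- `◇φ := ¬□¬φ` -/
def dia (φ : ModalForm) : ModalForm := not (box (not φ))

/-- `⊤ := ¬⊥` -/
def top : ModalForm := not bot

end ModalForm

/-- An S4 Kripke frame: nonempty set of worlds with a reflexive transitive relation. -/
structure KFrame : Type 1 where
  W : Type
  R : W → W → Prop
  nonempty : Nonempty W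
  refl : ∀ x, R x x
  trans : ∀ x y z, R x y → R y z → R x z

/-- A Kripke model: a frame with a valuation. -/
structure KModel : Type 1 extends KFrame where
  val : W → ℕ → Prop

/-- The model based on frame `F` with valuation `V`. -/
def KFrame.toModel (F : KFrame) (V : F.W → ℕ → Prop) : KModel :=
  { toKFrame := F, val := V }

/-- Satisfaction in a Kripke model. -/
def KModel.Sat (M : KModel) : M.W → ModalForm → Prop
  | w, .var p => M.val w p
  | _, .bot => False
  | w, .and φ ψ => M.Sat w φ ∧ M.Sat w ψ
  | w, .or φ ψ => M.Sat w φ ∨ M.Sat w ψ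
  | w, .not φ => ¬ M.Sat w φ
  | w, .imp φ ψ => M.Sat w φ → M.Sat w ψ
  | w, .box φ => ∀ y, M.R w y → M.Sat y φ

/-- `(M0,w0) →ₙ^{(P⁺,P⁻)} (M1,w1)`: every `(P⁺,P⁻)`-formula of depth ≤ n
satisfied at `(M0,w0)` is satisfied at `(M1,w1)`. -/
def ModalArrow (Pp Pm : Finset ℕ) (n : ℕ) (M0 : KModel) (w0 : M0.W)
    (M1 : KModel) (w1 : M1.W) : Prop :=
  ∀ φ : ModalForm, φ.vpos ⊆ Pp → φ.vneg ⊆ Pm → φ.depth ≤ n →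
    M0.Sat w0 φ → M1.Sat w1 φ

/-- p-morphism between frames. -/
def PMorphism (F G : KFrame) (f : F.W → G.W) : Prop :=
  (∀ x y, F.R x y → G.R (f x) (f y)) ∧
  (∀ x w, G.R (f x) w → ∃ z, F.R x z ∧ f z = w)

/-- The class `C` of Kripke models enjoys `n`-IP. -/
def EnjoysIP (C : Set KModel) (n : ℕ) : Prop :=
  ∀ (Pp Pm : Finset ℕ) (M0 M1 : KModel), M0 ∈ C → M1 ∈ C →
    ∀ (w0 : M0.W) (w1 : M1.W), ModalArrow Pp Pm n M0 w0 M1 w1 →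
      ∃ (F : KFrame) (wstar : F.W) (f0 : F.W → M0.W) (f1 : F.W → M1.W),
        (∀ V : F.W → ℕ → Prop, F.toModel V ∈ C) ∧
        PMorphism F M0.toKFrame f0 ∧
        PMorphism F M1.toKFrame f1 ∧
        f0 wstar = w0 ∧ f1 wstar = w1 ∧
        ∀ x : F.W, ModalArrow Pp Pm 0 M0 (f0 x) M1 (f1 x)

/-- A world is final iff every successor is also a predecessor. -/
def KModel.Final (M : KModel) (w : M.W) : Prop := ∀ y, M.R w y → M.R y w

/-- The cluster of a world. -/
def KModel.cluster (M : KModel) (w : M.W) : Set M.W := {u | M.R w u ∧ M.R u w}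

/-- Cluster `C0` of `M0` matches cluster `C1` of `M1`. -/
def Matches (Pp Pm : Finset ℕ) (M0 M1 : KModel) (C0 : Set M0.W) (C1 : Set M1.W) : Prop :=
  (∀ u0 ∈ C0, ∃ u1 ∈ C1, ModalArrow Pp Pm 0 M0 u0 M1 u1) ∧
  (∀ u1 ∈ C1, ∃ u0 ∈ C0, ModalArrow Pp Pm 0 M0 u0 M1 u1)

/-- `φ` is satisfied at every world of every model in `C`. -/
def ValidOn (C : Set KModel) (φ : ModalForm) : Prop :=
  ∀ M ∈ C, ∀ w : M.W, M.Sat w φ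

/-- The class of GV models: a root `x` below two incomparable final worlds `y, z`. -/
def C_GV : Set KModel :=
  {M | ∃ x y z : M.W, x ≠ y ∧ x ≠ z ∧ y ≠ z ∧
    (∀ w : M.W, w = x ∨ w = y ∨ w = z) ∧
    ∀ u v : M.W, M.R u v ↔
      (u = v ∨ (u = x ∧ v = y) ∨ (u = x ∧ v = z))}
namespace Stmt12Aux
open ModalForm

variable {Pp Pm : Finset ℕ} {M0 M1 : KModel}

/-- depth-0 agreement condition -/
def A0 (Pp Pm : Finset ℕ) (M0 M1 : KModel) (u : M0.W) (v : M1.W) : Prop :=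
  (∀ p ∈ Pp, M0.val u p → M1.val v p) ∧ (∀ p ∈ Pm, M1.val v p → M0.val u p)

@[simp] lemma vpos_dia (φ : ModalForm) : (dia φ).vpos = φ.vpos := by
  simp [dia, vpos, vneg]

@[simp] lemma vneg_dia (φ : ModalForm) : (dia φ).vneg = φ.vneg := by
  simp [dia, vpos, vneg]

@[simp] lemma depth_dia (φ : ModalForm) : (dia φ).depth = φ.depth + 1 := by
  simp [dia, depth]

lemma sat_dia {M : KModel} {w : M.W} {φ : ModalForm} :
    M.Sat w (dia φ) ↔ ∃ v, M.R w v ∧ M.Sat v φ := by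
  simp [dia, KModel.Sat]

lemma sat_box {M : KModel} {w : M.W} {φ : ModalForm} :
    M.Sat w (box φ) ↔ ∀ v, M.R w v → M.Sat v φ := Iff.rfl

lemma sat_mono {u : M0.W} {v : M1.W} (h : A0 Pp Pm M0 M1 u v) :
    ∀ φ : ModalForm, φ.depth ≤ 0 →
      ((φ.vpos ⊆ Pp → φ.vneg ⊆ Pm → (M0.Sat u φ → M1.Sat v φ)) ∧
       (φ.vpos ⊆ Pm → φ.vneg ⊆ Pp → (M1.Sat v φ → M0.Sat u φ))) := by
  intro φ
  induction φ with
  | var p =>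
    intro _
    constructor
    · intro hp _ hs
      exact h.1 p (hp (by simp [vpos])) hs
    · intro hp _ hs
      exact h.2 p (hp (by simp [vpos])) hs
  | bot => intro _; exact ⟨fun _ _ hs => hs.elim, fun _ _ hs => hs.elim⟩
  | and φ ψ ihφ ihψ =>
    intro hd
    simp only [depth, Nat.max_le] at hd
    simp only [vpos, vneg, Finset.union_subset_iff]
    exact ⟨fun hp hm hs => ⟨(ihφ hd.1).1 hp.1 hm.1 hs.1, (ihψ hd.2).1 hp.2 hm.2 hs.2⟩,
      fun hp hm hs => ⟨(ihφ hd.1).2 hp.1 hm.1 hs.1, (ihψ hd.2).2 hp.2 hm.2 hs.2⟩⟩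
  | or φ ψ ihφ ihψ =>
    intro hd
    simp only [depth, Nat.max_le] at hd
    simp only [vpos, vneg, Finset.union_subset_iff]
    exact ⟨fun hp hm hs => hs.elim (fun hs => Or.inl ((ihφ hd.1).1 hp.1 hm.1 hs))
        (fun hs => Or.inr ((ihψ hd.2).1 hp.2 hm.2 hs)),
      fun hp hm hs => hs.elim (fun hs => Or.inl ((ihφ hd.1).2 hp.1 hm.1 hs))
        (fun hs => Or.inr ((ihψ hd.2).2 hp.2 hm.2 hs))⟩
  | not φ ih =>
    intro hd
    simp only [depth] at hd
    simp only [vpos, vneg]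
    exact ⟨fun hp hm hs hc => hs ((ih hd).2 hm hp hc),
      fun hp hm hs hc => hs ((ih hd).1 hm hp hc)⟩
  | imp φ ψ ihφ ihψ =>
    intro hd
    simp only [depth, Nat.max_le] at hd
    simp only [vpos, vneg, Finset.union_subset_iff]
    exact ⟨fun hp hm hs hc => (ihψ hd.2).1 hp.2 hm.2 (hs ((ihφ hd.1).2 hm.1 hp.1 hc)),
      fun hp hm hs hc => (ihψ hd.2).2 hp.2 hm.2 (hs ((ihφ hd.1).1 hm.1 hp.1 hc))⟩
  | box φ ih =>
    intro hd
    simp only [depth] at hd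
    omega

lemma arrow0_of_A0 {u : M0.W} {v : M1.W} (h : A0 Pp Pm M0 M1 u v) :
    ModalArrow Pp Pm 0 M0 u M1 v :=
  fun φ hp hm hd hs => (sat_mono h φ hd).1 hp hm hs

lemma A0_of_arrow {n : ℕ} {u : M0.W} {v : M1.W} (h : ModalArrow Pp Pm n M0 u M1 v) :
    A0 Pp Pm M0 M1 u v := by
  constructor
  · intro p hp hval
    exact h (var p) (by simp [vpos, hp]) (by simp [vneg]) (by simp [depth]) hval
  · intro p hp hval
    by_contra hc
    exact h (not (var p)) (by simp [vpos, vneg]) (by simp [vpos, vneg, hp])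
      (by simp [depth]) hc hval

lemma exists_lit {u : M0.W} {v : M1.W} (h : ¬ A0 Pp Pm M0 M1 u v) :
    ∃ l : ModalForm, l.vpos ⊆ Pp ∧ l.vneg ⊆ Pm ∧ l.depth = 0 ∧
      M0.Sat u l ∧ ¬ M1.Sat v l := by
  rcases not_and_or.mp h with h | h
  · push_neg at h
    obtain ⟨p, hp, hval, hnv⟩ := h
    exact ⟨var p, by simp [vpos, hp], by simp [vneg], rfl, hval, hnv⟩
  · push_neg at h
    obtain ⟨p, hp, hval, hnv⟩ := h
    exact ⟨not (var p), by simp [vpos, vneg], by simp [vpos, vneg, hp], rfl, hnv,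
      fun hs => hs hval⟩

end Stmt12Aux
namespace Stmt12Aux
open ModalForm

variable {Pp Pm : Finset ℕ} {M0 M1 : KModel}

/-- The GV frame on `Fin 3`: root `0` below finals `1`, `2`. -/
def Fstar : KFrame where
  W := Fin 3
  R a b := a = b ∨ a = 0
  nonempty := ⟨0⟩
  refl _ := Or.inl rfl
  trans _ _ _ h1 h2 := h1.elim (fun e => e ▸ h2) Or.inr

lemma Fstar_mem (V : Fstar.W → ℕ → Prop) : Fstar.toModel V ∈ C_GV := by
  refine ⟨(0 : Fin 3), (1 : Fin 3), (2 : Fin 3), ?_, ?_, ?_, ?_, ?_⟩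
  · show (0 : Fin 3) ≠ 1; decide
  · show (0 : Fin 3) ≠ 2; decide
  · show (1 : Fin 3) ≠ 2; decide
  · show ∀ w : Fin 3, w = 0 ∨ w = 1 ∨ w = 2; decide
  · show ∀ u v : Fin 3, (u = v ∨ u = 0) ↔
      (u = v ∨ (u = 0 ∧ v = 1) ∨ (u = 0 ∧ v = 2))
    decide

def tri {α : Type} (a b c : α) : Fin 3 → α :=
  fun i => if i = 0 then a else if i = 1 then b else c

@[simp] lemma tri_zero {α : Type} (a b c : α) : tri a b c 0 = a := rfl
@[simp] lemma tri_one {α : Type} (a b c : α) : tri a b c 1 = b := rfl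
@[simp] lemma tri_two {α : Type} (a b c : α) : tri a b c 2 = c := rfl

lemma pm_const (M : KModel) (w : M.W) (hfin : ∀ v, M.R w v → v = w) :
    PMorphism Fstar M.toKFrame (fun _ => w) :=
  ⟨fun _ _ _ => M.refl w, fun x v h => ⟨x, Or.inl rfl, (hfin v h).symm⟩⟩

lemma pm_tri (M : KModel) (a b c : M.W) (hRa : ∀ v, M.R a v)
    (htot : ∀ v : M.W, v = a ∨ v = b ∨ v = c)
    (hfb : ∀ v, M.R b v → v = b) (hfc : ∀ v, M.R c v → v = c) :
    PMorphism Fstar M.toKFrame (tri a b c) := by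
  constructor
  · rintro i j (rfl | rfl)
    · exact M.refl _
    · exact hRa _
  · intro i v h
    rcases (show ∀ j : Fin 3, j = 0 ∨ j = 1 ∨ j = 2 by decide) i with rfl | rfl | rfl
    · rcases htot v with rfl | rfl | rfl
      · exact ⟨(0 : Fin 3), Or.inl rfl, rfl⟩
      · exact ⟨(1 : Fin 3), Or.inr rfl, rfl⟩
      · exact ⟨(2 : Fin 3), Or.inr rfl, rfl⟩
    · exact ⟨(1 : Fin 3), Or.inl rfl, (hfb v h).symm⟩
    · exact ⟨(2 : Fin 3), Or.inl rfl, (hfc v h).symm⟩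

/-- root-to-final: any successor of `w0` is A0-below a final `w1`. -/
lemma A0_RF {w0 u0 : M0.W} {w1 : M1.W}
    (harr : ModalArrow Pp Pm 3 M0 w0 M1 w1)
    (hu0 : M0.R w0 u0) (hfin1 : ∀ v, M1.R w1 v → v = w1) :
    A0 Pp Pm M0 M1 u0 w1 := by
  constructor
  · intro p hp hval
    have h2 := harr (dia (var p)) (by simp [vpos, vneg, hp]) (by simp [vpos, vneg])
      (by simp [depth]) (sat_dia.mpr ⟨u0, hu0, hval⟩)
    obtain ⟨v, hv, hs⟩ := sat_dia.mp h2
    have := hfin1 v hv; subst this; exact hs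
  · intro p hp hval
    by_contra hc
    have h2 := harr (dia (not (var p))) (by simp [vpos, vneg]) (by simp [vpos, vneg, hp])
      (by simp [depth]) (sat_dia.mpr ⟨u0, hu0, hc⟩)
    obtain ⟨v, hv, hs⟩ := sat_dia.mp h2
    have := hfin1 v hv; subst this; exact hs hval

/-- final-to-root: a final `w0` is A0-below any successor of `w1`. -/
lemma A0_FR {w0 : M0.W} {w1 v1 : M1.W}
    (harr : ModalArrow Pp Pm 3 M0 w0 M1 w1)
    (hfin0 : ∀ v, M0.R w0 v → v = w0) (hv1 : M1.R w1 v1) :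
    A0 Pp Pm M0 M1 w0 v1 := by
  constructor
  · intro p hp hval
    have h2 := harr (box (var p)) (by simp [vpos, vneg, hp]) (by simp [vpos, vneg])
      (by simp [depth]) (fun v hv => by rw [hfin0 v hv]; exact hval)
    exact h2 v1 hv1
  · intro p hp hval
    by_contra hc
    have h2 := harr (box (not (var p))) (by simp [vpos, vneg]) (by simp [vpos, vneg, hp])
      (by simp [depth]) (fun v hv => by rw [hfin0 v hv]; exact hc)
    exact h2 v1 hv1 hval

end Stmt12Aux
namespace Stmt12Aux
open ModalForm

variable {Pp Pm : Finset ℕ} {M0 M1 : KModel}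

/-- `u0` (final, reachable from `x0`) matching neither `v1` nor `v1'` is contradictory. -/
lemma L1 {x0 u0 : M0.W} {x1 v1 v1' : M1.W} {l1 l2 : ModalForm}
    (harr : ModalArrow Pp Pm 3 M0 x0 M1 x1)
    (hu0 : M0.R x0 u0) (hfin0 : ∀ v, M0.R u0 v → v = u0)
    (hreach : ∀ v, M1.R x1 v → M1.R v v1 ∨ M1.R v v1')
    (hp1 : l1.vpos ⊆ Pp) (hm1 : l1.vneg ⊆ Pm) (hd1 : l1.depth = 0)
    (hp2 : l2.vpos ⊆ Pp) (hm2 : l2.vneg ⊆ Pm) (hd2 : l2.depth = 0)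
    (hs1 : M0.Sat u0 l1) (hs2 : M0.Sat u0 l2)
    (hn1 : ¬ M1.Sat v1 l1) (hn2 : ¬ M1.Sat v1' l2) : False := by
  have hsat0 : M0.Sat x0 (dia (box (and l1 l2))) :=
    sat_dia.mpr ⟨u0, hu0, fun t ht => by
      have := hfin0 t ht; subst this; exact ⟨hs1, hs2⟩⟩
  have h2 := harr (dia (box (and l1 l2)))
    (by simp [vpos, vneg, Finset.union_subset_iff]; exact ⟨hp1, hp2⟩)
    (by simp [vpos, vneg, Finset.union_subset_iff]; exact ⟨hm1, hm2⟩)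
    (by simp [depth, hd1, hd2]) hsat0
  obtain ⟨v, hv, hbox⟩ := sat_dia.mp h2
  rcases hreach v hv with h | h
  · exact hn1 (hbox v1 h).1
  · exact hn2 (hbox v1' h).2

/-- final `v1` (successor of `x1`) matched by neither `u0` nor `u0'` is contradictory. -/
lemma L2 {x0 u0 u0' : M0.W} {x1 v1 : M1.W} {l1 l2 : ModalForm}
    (harr : ModalArrow Pp Pm 3 M0 x0 M1 x1)
    (hsucc0 : ∀ u, M0.R x0 u → M0.R u u0 ∨ M0.R u u0')
    (hfu0 : ∀ v, M0.R u0 v → v = u0) (hfu0' : ∀ v, M0.R u0' v → v = u0')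
    (hv1 : M1.R x1 v1) (hfinv1 : ∀ v, M1.R v1 v → v = v1)
    (hp1 : l1.vpos ⊆ Pp) (hm1 : l1.vneg ⊆ Pm) (hd1 : l1.depth = 0)
    (hp2 : l2.vpos ⊆ Pp) (hm2 : l2.vneg ⊆ Pm) (hd2 : l2.depth = 0)
    (hs1 : M0.Sat u0 l1) (hs2 : M0.Sat u0' l2)
    (hn1 : ¬ M1.Sat v1 l1) (hn2 : ¬ M1.Sat v1 l2) : False := by
  have hsat0 : M0.Sat x0 (box (or (dia (box l1)) (dia (box l2)))) := by
    intro u hu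
    rcases hsucc0 u hu with h | h
    · exact Or.inl (sat_dia.mpr ⟨u0, h, fun t ht => by rw [hfu0 t ht]; exact hs1⟩)
    · exact Or.inr (sat_dia.mpr ⟨u0', h, fun t ht => by rw [hfu0' t ht]; exact hs2⟩)
  have h2 := harr (box (or (dia (box l1)) (dia (box l2))))
    (by simp [vpos, vneg, Finset.union_subset_iff]; exact ⟨hp1, hp2⟩)
    (by simp [vpos, vneg, Finset.union_subset_iff]; exact ⟨hm1, hm2⟩)
    (by simp [depth, hd1, hd2]) hsat0
  rcases h2 v1 hv1 with h | h
  · obtain ⟨t, ht, hb⟩ := sat_dia.mp h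
    rw [hfinv1 t ht] at hb
    exact hn1 (hb v1 (M1.refl v1))
  · obtain ⟨t, ht, hb⟩ := sat_dia.mp h
    rw [hfinv1 t ht] at hb
    exact hn2 (hb v1 (M1.refl v1))

lemma matching {x0 y0 z0 : M0.W} {x1 y1 z1 : M1.W}
    (harr : ModalArrow Pp Pm 3 M0 x0 M1 x1)
    (hRy0 : M0.R x0 y0) (hRz0 : M0.R x0 z0)
    (hfy0 : ∀ v, M0.R y0 v → v = y0) (hfz0 : ∀ v, M0.R z0 v → v = z0)
    (hRy1 : M1.R x1 y1) (hRz1 : M1.R x1 z1)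
    (hfy1 : ∀ v, M1.R y1 v → v = y1) (hfz1 : ∀ v, M1.R z1 v → v = z1)
    (hsucc0 : ∀ u, M0.R x0 u → M0.R u y0 ∨ M0.R u z0)
    (hsucc1 : ∀ v, M1.R x1 v → M1.R v y1 ∨ M1.R v z1) :
    (A0 Pp Pm M0 M1 y0 y1 ∧ A0 Pp Pm M0 M1 z0 z1) ∨
    (A0 Pp Pm M0 M1 y0 z1 ∧ A0 Pp Pm M0 M1 z0 y1) := by
  by_contra h
  obtain ⟨h1, h2⟩ := not_or.mp h
  rcases not_and_or.mp h1 with hyy | hzz <;> rcases not_and_or.mp h2 with hyz | hzy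
  · obtain ⟨l1, p1, m1, d1, s1, n1⟩ := exists_lit hyy
    obtain ⟨l2, p2, m2, d2, s2, n2⟩ := exists_lit hyz
    exact L1 harr hRy0 hfy0 hsucc1 p1 m1 d1 p2 m2 d2 s1 s2 n1 n2
  · obtain ⟨l1, p1, m1, d1, s1, n1⟩ := exists_lit hyy
    obtain ⟨l2, p2, m2, d2, s2, n2⟩ := exists_lit hzy
    exact L2 harr hsucc0 hfy0 hfz0 hRy1 hfy1 p1 m1 d1 p2 m2 d2 s1 s2 n1 n2
  · obtain ⟨l1, p1, m1, d1, s1, n1⟩ := exists_lit hyz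
    obtain ⟨l2, p2, m2, d2, s2, n2⟩ := exists_lit hzz
    exact L2 harr hsucc0 hfy0 hfz0 hRz1 hfz1 p1 m1 d1 p2 m2 d2 s1 s2 n1 n2
  · obtain ⟨l1, p1, m1, d1, s1, n1⟩ := exists_lit hzz
    obtain ⟨l2, p2, m2, d2, s2, n2⟩ := exists_lit hzy
    exact L1 harr hRz0 hfz0 (fun v hv => (hsucc1 v hv).symm) p1 m1 d1 p2 m2 d2 s1 s2 n1 n2
end Stmt12Aux

open Stmt12Aux

theorem stmt12 : EnjoysIP C_GV 3 := by
  intro Pp Pm M0 M1 hM0 hM1 w0 w1 harr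
  obtain ⟨x0, y0, z0, hxy0, hxz0, hyz0, htot0, hR0⟩ := hM0
  obtain ⟨x1, y1, z1, hxy1, hxz1, hyz1, htot1, hR1⟩ := hM1
  -- basic structure of M0
  have hRx0 : ∀ v, M0.R x0 v := fun v => (hR0 x0 v).mpr
    (by rcases htot0 v with rfl | rfl | rfl <;> tauto)
  have hfy0 : ∀ v, M0.R y0 v → v = y0 := by
    intro v h
    rcases (hR0 y0 v).mp h with h | ⟨h, _⟩ | ⟨h, _⟩
    · exact h.symm
    · exact absurd h.symm hxy0
    · exact absurd h.symm hxy0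
  have hfz0 : ∀ v, M0.R z0 v → v = z0 := by
    intro v h
    rcases (hR0 z0 v).mp h with h | ⟨h, _⟩ | ⟨h, _⟩
    · exact h.symm
    · exact absurd h.symm hxz0
    · exact absurd h.symm hxz0
  have hsucc0 : ∀ u, M0.R x0 u → M0.R u y0 ∨ M0.R u z0 := by
    intro u _
    rcases htot0 u with h | h | h <;> rw [h]
    · exact Or.inl (hRx0 y0)
    · exact Or.inl (M0.refl y0)
    · exact Or.inr (M0.refl z0)
  -- basic structure of M1
  have hRx1 : ∀ v, M1.R x1 v := fun v => (hR1 x1 v).mpr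
    (by rcases htot1 v with rfl | rfl | rfl <;> tauto)
  have hfy1 : ∀ v, M1.R y1 v → v = y1 := by
    intro v h
    rcases (hR1 y1 v).mp h with h | ⟨h, _⟩ | ⟨h, _⟩
    · exact h.symm
    · exact absurd h.symm hxy1
    · exact absurd h.symm hxy1
  have hfz1 : ∀ v, M1.R z1 v → v = z1 := by
    intro v h
    rcases (hR1 z1 v).mp h with h | ⟨h, _⟩ | ⟨h, _⟩
    · exact h.symm
    · exact absurd h.symm hxz1
    · exact absurd h.symm hxz1
  have hsucc1 : ∀ v, M1.R x1 v → M1.R v y1 ∨ M1.R v z1 := by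
    intro v _
    rcases htot1 v with h | h | h <;> rw [h]
    · exact Or.inl (hRx1 y1)
    · exact Or.inl (M1.refl y1)
    · exact Or.inr (M1.refl z1)
  have htot1' : ∀ v : M1.W, v = x1 ∨ v = z1 ∨ v = y1 := by
    intro v; rcases htot1 v with h | h | h <;> tauto
  -- generic constructions
  have finfin : ∀ (u0 : M0.W) (u1 : M1.W), (∀ v, M0.R u0 v → v = u0) →
      (∀ v, M1.R u1 v → v = u1) → ModalArrow Pp Pm 3 M0 u0 M1 u1 →
      ∃ (F : KFrame) (wstar : F.W) (f0 : F.W → M0.W) (f1 : F.W → M1.W),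
        (∀ V : F.W → ℕ → Prop, F.toModel V ∈ C_GV) ∧
        PMorphism F M0.toKFrame f0 ∧ PMorphism F M1.toKFrame f1 ∧
        f0 wstar = u0 ∧ f1 wstar = u1 ∧
        ∀ x : F.W, ModalArrow Pp Pm 0 M0 (f0 x) M1 (f1 x) := by
    intro u0 u1 hf0 hf1 h
    exact ⟨Fstar, (0 : Fin 3), fun _ => u0, fun _ => u1, Fstar_mem,
      pm_const M0 u0 hf0, pm_const M1 u1 hf1, rfl, rfl,
      fun _ => arrow0_of_A0 (A0_of_arrow h)⟩
  -- case analysis on the positions of w0 and w1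
  rcases htot0 w0 with rfl | rfl | rfl <;> rcases htot1 w1 with rfl | rfl | rfl
  -- w0 = x0, w1 = x1
  · rcases matching harr (hRx0 y0) (hRx0 z0) hfy0 hfz0 (hRx1 y1) (hRx1 z1)
        hfy1 hfz1 hsucc0 hsucc1 with ⟨hA1, hA2⟩ | ⟨hA1, hA2⟩
    · refine ⟨Fstar, (0 : Fin 3), tri w0 y0 z0, tri w1 y1 z1, Fstar_mem,
        pm_tri M0 w0 y0 z0 hRx0 htot0 hfy0 hfz0,
        pm_tri M1 w1 y1 z1 hRx1 htot1 hfy1 hfz1, rfl, rfl, ?_⟩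
      intro a
      rcases (show ∀ j : Fin 3, j = 0 ∨ j = 1 ∨ j = 2 by decide) a with rfl | rfl | rfl
      · exact arrow0_of_A0 (A0_of_arrow harr)
      · exact arrow0_of_A0 hA1
      · exact arrow0_of_A0 hA2
    · refine ⟨Fstar, (0 : Fin 3), tri w0 y0 z0, tri w1 z1 y1, Fstar_mem,
        pm_tri M0 w0 y0 z0 hRx0 htot0 hfy0 hfz0,
        pm_tri M1 w1 z1 y1 hRx1 htot1' hfz1 hfy1, rfl, rfl, ?_⟩
      intro a
      rcases (show ∀ j : Fin 3, j = 0 ∨ j = 1 ∨ j = 2 by decide) a with rfl | rfl | rfl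
      · exact arrow0_of_A0 (A0_of_arrow harr)
      · exact arrow0_of_A0 hA1
      · exact arrow0_of_A0 hA2
  -- w0 = x0, w1 = y1
  · refine ⟨Fstar, (0 : Fin 3), tri w0 y0 z0, fun _ => w1, Fstar_mem,
      pm_tri M0 w0 y0 z0 hRx0 htot0 hfy0 hfz0, pm_const M1 w1 hfy1, rfl, rfl, ?_⟩
    intro a
    rcases (show ∀ j : Fin 3, j = 0 ∨ j = 1 ∨ j = 2 by decide) a with rfl | rfl | rfl
    · exact arrow0_of_A0 (A0_of_arrow harr)
    · exact arrow0_of_A0 (A0_RF harr (hRx0 y0) hfy1)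
    · exact arrow0_of_A0 (A0_RF harr (hRx0 z0) hfy1)
  -- w0 = x0, w1 = z1
  · refine ⟨Fstar, (0 : Fin 3), tri w0 y0 z0, fun _ => w1, Fstar_mem,
      pm_tri M0 w0 y0 z0 hRx0 htot0 hfy0 hfz0, pm_const M1 w1 hfz1, rfl, rfl, ?_⟩
    intro a
    rcases (show ∀ j : Fin 3, j = 0 ∨ j = 1 ∨ j = 2 by decide) a with rfl | rfl | rfl
    · exact arrow0_of_A0 (A0_of_arrow harr)
    · exact arrow0_of_A0 (A0_RF harr (hRx0 y0) hfz1)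
    · exact arrow0_of_A0 (A0_RF harr (hRx0 z0) hfz1)
  -- w0 = y0, w1 = x1
  · refine ⟨Fstar, (0 : Fin 3), fun _ => w0, tri w1 y1 z1, Fstar_mem,
      pm_const M0 w0 hfy0, pm_tri M1 w1 y1 z1 hRx1 htot1 hfy1 hfz1, rfl, rfl, ?_⟩
    intro a
    rcases (show ∀ j : Fin 3, j = 0 ∨ j = 1 ∨ j = 2 by decide) a with rfl | rfl | rfl
    · exact arrow0_of_A0 (A0_of_arrow harr)
    · exact arrow0_of_A0 (A0_FR harr hfy0 (hRx1 y1))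
    · exact arrow0_of_A0 (A0_FR harr hfy0 (hRx1 z1))
  -- w0 = y0, w1 = y1
  · exact finfin w0 w1 hfy0 hfy1 harr
  -- w0 = y0, w1 = z1
  · exact finfin w0 w1 hfy0 hfz1 harr
  -- w0 = z0, w1 = x1
  · refine ⟨Fstar, (0 : Fin 3), fun _ => w0, tri w1 y1 z1, Fstar_mem,
      pm_const M0 w0 hfz0, pm_tri M1 w1 y1 z1 hRx1 htot1 hfy1 hfz1, rfl, rfl, ?_⟩
    intro a
    rcases (show ∀ j : Fin 3, j = 0 ∨ j = 1 ∨ j = 2 by decide) a with rfl | rfl | rfl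
    · exact arrow0_of_A0 (A0_of_arrow harr)
    · exact arrow0_of_A0 (A0_FR harr hfz0 (hRx1 y1))
    · exact arrow0_of_A0 (A0_FR harr hfz0 (hRx1 z1))
  -- w0 = z0, w1 = y1
  · exact finfin w0 w1 hfz0 hfy1 harr
  -- w0 = z0, w1 = z1
  · exact finfin w0 w1 hfz0 hfz1 harr
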